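/- Let Π_1, …, Π_{d²} be a SIC in dimension d ≥ 2. Define Q_j⁻ = √(d+1)·Π_j + ((1 − √(d+1))/d)·I and Q_j⁺ = −√(d+1)·Π_j + ((1 + √(d+1))/d)·I. Then both families {Q_j⁻} and {Q_j⁺} are NQPRs in dimension d; moreover, the minimal eigenvalue of every Q_j⁻ equals (1 − √(d+1))/d (so the negativity of {Q_j⁻} is (√(d+1) − 1)/d), and the minimal eigenvalue of every Q_j⁺ equals (1 − (d−1)√(d+1))/d (so the negativity of {Q_j⁺} is ((d−1)√(d+1) − 1)/d). -/

import Mathlib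

open Matrix in
lemma aux_trace_zero {n : Type*} [Fintype n] {T : Matrix n n ℂ}
    (h : (Tᴴ * T).trace = 0) : T = 0 := by
  have h2 : ∑ j, ∑ i, Complex.normSq (T i j) = 0 := by
    have : (Tᴴ * T).trace = ((∑ j, ∑ i, Complex.normSq (T i j) : ℝ) : ℂ) := by
      simp [Matrix.trace, Matrix.diag, Matrix.mul_apply, Matrix.conjTranspose_apply,
        Complex.normSq_eq_conj_mul_self]
    exact_mod_cast this ▸ h
  ext i j
  have hj := (Finset.sum_eq_zero_iff_of_nonneg (fun j _ => Finset.sum_nonneg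
    (fun i _ => Complex.normSq_nonneg _))).mp h2 j (Finset.mem_univ j)
  have hi := (Finset.sum_eq_zero_iff_of_nonneg (fun i _ => Complex.normSq_nonneg _)).mp hj i
    (Finset.mem_univ i)
  simpa using Complex.normSq_eq_zero.mp hi

open Matrix in
lemma aux_sum_proj (d : ℕ) (hd : 2 ≤ d)
    (P : Fin (d ^ 2) → Matrix (Fin d) (Fin d) ℂ)
    (hherm : ∀ j, (P j).IsHermitian)
    (htr : ∀ j, (P j).trace = 1)
    (hpair : ∀ j k, (P j * P k).trace =
      ((d : ℂ) * (if j = k then 1 else 0) + 1) / ((d : ℂ) + 1)) :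
    ∑ j, P j = (d : ℂ) • (1 : Matrix (Fin d) (Fin d) ℂ) := by
  have hd0 : (d : ℂ) ≠ 0 := Nat.cast_ne_zero.mpr (by omega)
  have hd1 : (d : ℂ) + 1 ≠ 0 := by
    intro h
    have : ((d : ℝ) : ℂ) + 1 = 0 := by push_cast; exact h
    have := congrArg Complex.re this
    simp at this
    nlinarith [Nat.cast_nonneg (α := ℝ) d]
  set S : Matrix (Fin d) (Fin d) ℂ := ∑ j, P j with hS
  set T : Matrix (Fin d) (Fin d) ℂ := S - (d : ℂ) • 1 with hT
  have htrS : S.trace = (d : ℂ)^2 := by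
    rw [hS, Matrix.trace_sum]
    simp [htr]
  have htrT : T.trace = 0 := by
    simp [hT, Matrix.trace_sub, htrS, Matrix.trace_smul, Matrix.trace_one]
    ring
  have htrSP : ∀ k, (S * P k).trace = (d : ℂ) := by
    intro k
    rw [hS, Finset.sum_mul, Matrix.trace_sum]
    have : ∀ j, (P j * P k).trace = ((d : ℂ) * (if j = k then 1 else 0) + 1) / ((d : ℂ) + 1) :=
      fun j => hpair j k
    rw [Finset.sum_congr rfl (fun j _ => this j)]
    have hsum : ∑ j : Fin (d^2), ((d : ℂ) * (if j = k then 1 else 0) + 1) =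
        (d : ℂ) + (d:ℂ)^2 := by
      rw [Finset.sum_add_distrib, Finset.sum_const, Finset.card_univ, Fintype.card_fin,
        ← Finset.mul_sum]
      simp [Finset.sum_ite_eq']
    rw [← Finset.sum_div, hsum]
    field_simp
    ring
  have htrTP : ∀ k, (T * P k).trace = 0 := by
    intro k
    rw [hT, Matrix.sub_mul, Matrix.trace_sub, htrSP, Matrix.smul_mul, Matrix.one_mul,
      Matrix.trace_smul, htr]
    simp
  have htrTT : (T * T).trace = 0 := by
    conv_lhs => rw [show T * T = T * S - (d:ℂ) • T by rw [hT]; rw [Matrix.mul_sub]; simp [Matrix.mul_smul]]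
    rw [Matrix.trace_sub, Matrix.trace_smul, htrT, hS, Finset.mul_sum, Matrix.trace_sum]
    rw [Finset.sum_congr rfl (fun k _ => htrTP k)]
    simp
  have hTh : Tᴴ = T := by
    rw [hT, Matrix.conjTranspose_sub, Matrix.conjTranspose_smul, Matrix.conjTranspose_one]
    rw [show star (d : ℂ) = (d : ℂ) by simp]
    rw [hS, Matrix.conjTranspose_sum]
    congr 1
    exact Finset.sum_congr rfl (fun j _ => (hherm j).eq)
  have : T = 0 := aux_trace_zero (by rw [hTh]; exact htrTT)
  rw [hT] at this
  linear_combination (norm := abel) this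

open Matrix in
lemma aux_eig_dichotomy {d : ℕ} {A : Matrix (Fin d) (Fin d) ℂ} (hA : A.IsHermitian)
    (α β : ℝ) (h : (A - (α : ℂ) • 1) * (A - (β : ℂ) • 1) = 0) (i : Fin d) :
    hA.eigenvalues i = α ∨ hA.eigenvalues i = β := by
  set v : Fin d → ℂ := ⇑(hA.eigenvectorBasis i) with hv
  have hv0 : v ≠ 0 := by
    have := hA.eigenvectorBasis.orthonormal.ne_zero i
    intro hcontra
    apply this
    ext k
    exact congrFun hcontra k
  set μ : ℝ := hA.eigenvalues i with hμ
  have hAv : A *ᵥ v = (μ : ℂ) • v := by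
    have := hA.mulVec_eigenvectorBasis i
    rw [← hv] at this
    rw [this]
    ext k
    simp [Complex.real_smul, hμ]
  have key : ((A - (α : ℂ) • 1) * (A - (β : ℂ) • 1)) *ᵥ v
      = (((μ : ℂ) - α) * ((μ : ℂ) - β)) • v := by
    rw [← Matrix.mulVec_mulVec]
    have h1 : (A - (β : ℂ) • 1) *ᵥ v = ((μ : ℂ) - β) • v := by
      rw [Matrix.sub_mulVec, hAv, Matrix.smul_mulVec, Matrix.one_mulVec, sub_smul]
    rw [h1, Matrix.mulVec_smul, Matrix.sub_mulVec, hAv, Matrix.smul_mulVec,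
      Matrix.one_mulVec]
    module
  rw [h, Matrix.zero_mulVec] at key
  have hs : (((μ : ℂ) - α) * ((μ : ℂ) - β)) = 0 := by
    rcases smul_eq_zero.mp key.symm with h' | h'
    · exact h'
    · exact absurd h' hv0
  rcases mul_eq_zero.mp hs with h' | h'
  · left; exact_mod_cast sub_eq_zero.mp h'
  · right; exact_mod_cast sub_eq_zero.mp h'

open Matrix in
lemma aux_trace_eq_sum {d : ℕ} {A : Matrix (Fin d) (Fin d) ℂ} (hA : A.IsHermitian) :
    A.trace = ∑ i, (hA.eigenvalues i : ℂ) := by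
  conv_lhs => rw [hA.spectral_theorem]
  rw [Unitary.conjStarAlgAut_apply]
  rw [Matrix.trace_mul_cycle]
  rw [show (star (hA.eigenvectorUnitary : Matrix (Fin d) (Fin d) ℂ)) *
      (hA.eigenvectorUnitary : Matrix (Fin d) (Fin d) ℂ) = 1 from
    Matrix.mem_unitaryGroup_iff'.mp hA.eigenvectorUnitary.2, one_mul, Matrix.trace_diagonal]
  simp

lemma aux_iInf {ι : Type*} [Fintype ι] [Nonempty ι] (e : ι → ℝ) (m M : ℝ) (hmM : m ≤ M)
    (h : ∀ i, e i = m ∨ e i = M) (hex : ∃ i, e i = m) : ⨅ i, e i = m := by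
  obtain ⟨i0, hi0⟩ := hex
  apply le_antisymm
  · exact hi0 ▸ ciInf_le (Finite.bddBelow_range e) i0
  · refine le_ciInf fun i => ?_
    rcases h i with h' | h' <;> rw [h']
    exact hmM

open Matrix in
lemma aux_Q_trace (d : ℕ) (hd : 2 ≤ d) (a b : ℂ) (hb : b = (1 - a) / d)
    (M : Matrix (Fin d) (Fin d) ℂ) (htrM : M.trace = 1) :
    (a • M + b • 1).trace = 1 := by
  have hd0 : (d : ℂ) ≠ 0 := Nat.cast_ne_zero.mpr (by omega)
  rw [Matrix.trace_add, Matrix.trace_smul, Matrix.trace_smul, htrM, Matrix.trace_one]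
  simp only [smul_eq_mul, mul_one, Fintype.card_fin]
  rw [hb]
  field_simp
  ring

open Matrix in
lemma aux_Q_pair (d : ℕ) (hd : 2 ≤ d) (a b : ℂ) (ha : a ^ 2 = (d : ℂ) + 1)
    (hb : b = (1 - a) / d)
    (Mj Mk : Matrix (Fin d) (Fin d) ℂ) (htrj : Mj.trace = 1) (htrk : Mk.trace = 1) (t : ℂ)
    (hpair : (Mj * Mk).trace = ((d : ℂ) * t + 1) / ((d : ℂ) + 1)) :
    ((a • Mj + b • 1) * (a • Mk + b • 1)).trace = (d : ℂ) * t := by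
  have hd0 : (d : ℂ) ≠ 0 := Nat.cast_ne_zero.mpr (by omega)
  have hd1 : (d : ℂ) + 1 ≠ 0 := by
    intro h
    have := congrArg Complex.re h
    push_cast at this
    simp at this
    nlinarith [Nat.cast_nonneg (α := ℝ) d]
  have expand : (a • Mj + b • 1) * (a • Mk + b • 1)
      = (a * a) • (Mj * Mk) + (a * b) • Mj + (b * a) • Mk + (b * b) • 1 := by
    simp only [Matrix.add_mul, Matrix.mul_add, smul_mul_assoc, mul_smul_comm,
      Matrix.one_mul, Matrix.mul_one]
    module
  rw [expand, Matrix.trace_add, Matrix.trace_add, Matrix.trace_add, Matrix.trace_smul,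
    Matrix.trace_smul, Matrix.trace_smul, Matrix.trace_smul, hpair, htrj, htrk,
    Matrix.trace_one]
  simp only [smul_eq_mul, mul_one, Fintype.card_fin]
  have haa : a * a = (d : ℂ) + 1 := by linear_combination ha
  rw [hb]
  field_simp
  linear_combination ((d : ℂ) ^ 2 * t - 1) * ha

open Matrix in
lemma aux_Q_sum (d : ℕ) (hd : 2 ≤ d) (a b : ℂ) (hb : b = (1 - a) / d)
    (P : Fin (d ^ 2) → Matrix (Fin d) (Fin d) ℂ)
    (hsum : ∑ j, P j = (d : ℂ) • (1 : Matrix (Fin d) (Fin d) ℂ)) :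
    ∑ j, (a • P j + b • 1) = (d : ℂ) • (1 : Matrix (Fin d) (Fin d) ℂ) := by
  have hd0 : (d : ℂ) ≠ 0 := Nat.cast_ne_zero.mpr (by omega)
  rw [Finset.sum_add_distrib, ← Finset.smul_sum, hsum, Finset.sum_const, Finset.card_univ,
    Fintype.card_fin, ← Nat.cast_smul_eq_nsmul ℂ, smul_smul, smul_smul, ← add_smul]
  congr 1
  rw [hb]
  push_cast
  field_simp
  ring

/-- The frame element `Q_j⁻ = √(d+1)·Π_j + ((1 − √(d+1))/d)·I` constructed from a SIC. -/
noncomputable def Qminus (d : ℕ) (P : Fin (d ^ 2) → Matrix (Fin d) (Fin d) ℂ)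
    (j : Fin (d ^ 2)) : Matrix (Fin d) (Fin d) ℂ :=
  (Real.sqrt (d + 1) : ℂ) • P j +
    (((1 - Real.sqrt (d + 1)) / d : ℝ) : ℂ) • (1 : Matrix (Fin d) (Fin d) ℂ)

/-- The frame element `Q_j⁺ = −√(d+1)·Π_j + ((1 + √(d+1))/d)·I` constructed from a SIC. -/
noncomputable def Qplus (d : ℕ) (P : Fin (d ^ 2) → Matrix (Fin d) (Fin d) ℂ)
    (j : Fin (d ^ 2)) : Matrix (Fin d) (Fin d) ℂ :=
  -((Real.sqrt (d + 1) : ℂ)) • P j +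
    (((1 + Real.sqrt (d + 1)) / d : ℝ) : ℂ) • (1 : Matrix (Fin d) (Fin d) ℂ)

/-- Given a SIC `Π` in dimension `d ≥ 2`, the families `{Q_j⁻}` and `{Q_j⁺}`
are NQPRs; the minimal eigenvalue of every `Q_j⁻` equals `(1 − √(d+1))/d` (negativity
`(√(d+1) − 1)/d`), and the minimal eigenvalue of every `Q_j⁺` equals `(1 − (d−1)√(d+1))/d`
(negativity `((d−1)√(d+1) − 1)/d`). -/
theorem stmt_18 (d : ℕ) (hd : 2 ≤ d)
    (P : Fin (d ^ 2) → Matrix (Fin d) (Fin d) ℂ)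
    (hherm : ∀ j, (P j).IsHermitian)
    (hproj : ∀ j, P j * P j = P j)
    (htr : ∀ j, (P j).trace = 1)
    (hpair : ∀ j k, (P j * P k).trace =
      ((d : ℂ) * (if j = k then 1 else 0) + 1) / ((d : ℂ) + 1)) :
    (∀ j, (Qminus d P j).IsHermitian) ∧
    (∀ j, (Qminus d P j).trace = 1) ∧
    (∀ j k, (Qminus d P j * Qminus d P k).trace = if j = k then (d : ℂ) else 0) ∧
    (∑ j, Qminus d P j = (d : ℂ) • (1 : Matrix (Fin d) (Fin d) ℂ)) ∧
    (∀ j, (Qplus d P j).IsHermitian) ∧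
    (∀ j, (Qplus d P j).trace = 1) ∧
    (∀ j k, (Qplus d P j * Qplus d P k).trace = if j = k then (d : ℂ) else 0) ∧
    (∑ j, Qplus d P j = (d : ℂ) • (1 : Matrix (Fin d) (Fin d) ℂ)) ∧
    (∀ j, ∀ h : (Qminus d P j).IsHermitian,
      (⨅ i, h.eigenvalues i) = (1 - Real.sqrt (d + 1)) / d) ∧
    (∀ j, ∀ h : (Qplus d P j).IsHermitian,
      (⨅ i, h.eigenvalues i) = (1 - ((d : ℝ) - 1) * Real.sqrt (d + 1)) / d) := by
  have hdpos : 0 < d := by omega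
  haveI : Nonempty (Fin d) := ⟨⟨0, hdpos⟩⟩
  have hd0R : (d : ℝ) ≠ 0 := Nat.cast_ne_zero.mpr (by omega)
  have hd2R : (2 : ℝ) ≤ (d : ℝ) := by exact_mod_cast hd
  set s : ℝ := Real.sqrt (d + 1) with hsdef
  have hs1 : (0 : ℝ) < (d : ℝ) + 1 := by positivity
  have hs : 0 < s := Real.sqrt_pos.mpr hs1
  have hs2 : s ^ 2 = (d : ℝ) + 1 := Real.sq_sqrt (le_of_lt hs1)
  have haC_m : ((s : ℝ) : ℂ) ^ 2 = (d : ℂ) + 1 := by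
    rw [← Complex.ofReal_pow, hs2]; push_cast; ring
  have haC_p : (-((s : ℝ) : ℂ)) ^ 2 = (d : ℂ) + 1 := by rw [neg_sq]; exact haC_m
  have hsumP := aux_sum_proj d hd P hherm htr hpair
  -- Hermitian
  have hQmH : ∀ j, (Qminus d P j).IsHermitian := by
    intro j
    unfold Qminus
    simp [Matrix.IsHermitian, Matrix.conjTranspose_add, Matrix.conjTranspose_smul,
      (hherm j).eq, Complex.star_def, Complex.conj_ofReal]
  have hQpH : ∀ j, (Qplus d P j).IsHermitian := by
    intro j
    unfold Qplus
    simp [Matrix.IsHermitian, Matrix.conjTranspose_add, Matrix.conjTranspose_smul,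
      (hherm j).eq, Complex.star_def, Complex.conj_ofReal]
  -- traces
  have hQmtr : ∀ j, (Qminus d P j).trace = 1 := by
    intro j
    unfold Qminus
    exact aux_Q_trace d hd _ _ (by push_cast; ring) (P j) (htr j)
  have hQptr : ∀ j, (Qplus d P j).trace = 1 := by
    intro j
    unfold Qplus
    exact aux_Q_trace d hd _ _ (by push_cast; ring) (P j) (htr j)
  -- pair traces
  have hQmpair : ∀ j k, (Qminus d P j * Qminus d P k).trace = if j = k then (d : ℂ) else 0 := by
    intro j k
    unfold Qminus
    rw [aux_Q_pair d hd _ _ haC_m (by push_cast; ring) (P j) (P k) (htr j) (htr k)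
      (if j = k then 1 else 0) (hpair j k)]
    split_ifs <;> ring
  have hQppair : ∀ j k, (Qplus d P j * Qplus d P k).trace = if j = k then (d : ℂ) else 0 := by
    intro j k
    unfold Qplus
    rw [aux_Q_pair d hd _ _ haC_p (by push_cast; ring) (P j) (P k) (htr j) (htr k)
      (if j = k then 1 else 0) (hpair j k)]
    split_ifs <;> ring
  -- sums
  have hQmsum : ∑ j, Qminus d P j = (d : ℂ) • (1 : Matrix (Fin d) (Fin d) ℂ) := by
    unfold Qminus
    exact aux_Q_sum d hd _ _ (by push_cast; ring) P hsumP
  have hQpsum : ∑ j, Qplus d P j = (d : ℂ) • (1 : Matrix (Fin d) (Fin d) ℂ) := by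
    unfold Qplus
    exact aux_Q_sum d hd _ _ (by push_cast; ring) P hsumP
  -- quadratic identities
  have hquadm : ∀ j, (Qminus d P j - ((s + (1 - s) / d : ℝ) : ℂ) • 1) *
      (Qminus d P j - (((1 - s) / d : ℝ) : ℂ) • 1) = 0 := by
    intro j
    have e1 : Qminus d P j - (((1 - s) / d : ℝ) : ℂ) • 1 = ((s : ℝ) : ℂ) • P j := by
      unfold Qminus; push_cast; module
    have e2 : Qminus d P j - ((s + (1 - s) / d : ℝ) : ℂ) • 1 = ((s : ℝ) : ℂ) • (P j - 1) := by
      unfold Qminus; push_cast; module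
    rw [e1, e2, smul_mul_assoc, mul_smul_comm, smul_smul, Matrix.sub_mul, Matrix.one_mul,
      hproj j, sub_self, smul_zero]
  have hquadp : ∀ j, (Qplus d P j - (((1 + s) / d - s : ℝ) : ℂ) • 1) *
      (Qplus d P j - (((1 + s) / d : ℝ) : ℂ) • 1) = 0 := by
    intro j
    have e1 : Qplus d P j - (((1 + s) / d : ℝ) : ℂ) • 1 = (-((s : ℝ) : ℂ)) • P j := by
      unfold Qplus; push_cast; module
    have e2 : Qplus d P j - (((1 + s) / d - s : ℝ) : ℂ) • 1 = (-((s : ℝ) : ℂ)) • (P j - 1) := by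
      unfold Qplus; push_cast; module
    rw [e1, e2, smul_mul_assoc, mul_smul_comm, smul_smul, Matrix.sub_mul, Matrix.one_mul,
      hproj j, sub_self, smul_zero]
  -- minimal eigenvalues
  have heigm : ∀ j, ∀ h : (Qminus d P j).IsHermitian,
      (⨅ i, h.eigenvalues i) = (1 - s) / d := by
    intro j h
    have dich : ∀ i, h.eigenvalues i = (1 - s) / d ∨ h.eigenvalues i = s + (1 - s) / d :=
      fun i => (aux_eig_dichotomy h (s + (1 - s) / d) ((1 - s) / d) (hquadm j) i).symm
    have hsum1 : ∑ i, h.eigenvalues i = 1 := by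
      have h1 := aux_trace_eq_sum h
      rw [hQmtr j] at h1
      have h2 : ((∑ i, h.eigenvalues i : ℝ) : ℂ) = ((1 : ℝ) : ℂ) := by push_cast; rw [← h1]
      exact_mod_cast h2
    refine aux_iInf _ ((1 - s) / d) (s + (1 - s) / d) (by linarith [hs.le]) dich ?_
    by_contra hno
    push_neg at hno
    have hall : ∀ i, h.eigenvalues i = s + (1 - s) / d := fun i => (dich i).resolve_left (hno i)
    rw [Finset.sum_congr rfl (fun i _ => hall i), Finset.sum_const, Finset.card_univ,
      Fintype.card_fin, nsmul_eq_mul] at hsum1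
    have he : (d : ℝ) * (s + (1 - s) / d) = (d : ℝ) * s + 1 - s := by field_simp; ring
    rw [he] at hsum1
    nlinarith [hs]
  have heigp : ∀ j, ∀ h : (Qplus d P j).IsHermitian,
      (⨅ i, h.eigenvalues i) = (1 - ((d : ℝ) - 1) * s) / d := by
    intro j h
    have dich : ∀ i, h.eigenvalues i = (1 + s) / d - s ∨ h.eigenvalues i = (1 + s) / d :=
      fun i => aux_eig_dichotomy h ((1 + s) / d - s) ((1 + s) / d) (hquadp j) i
    have hsum1 : ∑ i, h.eigenvalues i = 1 := by
      have h1 := aux_trace_eq_sum h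
      rw [hQptr j] at h1
      have h2 : ((∑ i, h.eigenvalues i : ℝ) : ℂ) = ((1 : ℝ) : ℂ) := by push_cast; rw [← h1]
      exact_mod_cast h2
    have key : (⨅ i, h.eigenvalues i) = (1 + s) / d - s := by
      refine aux_iInf _ ((1 + s) / d - s) ((1 + s) / d) (by linarith [hs.le]) dich ?_
      by_contra hno
      push_neg at hno
      have hall : ∀ i, h.eigenvalues i = (1 + s) / d := fun i => (dich i).resolve_left (hno i)
      rw [Finset.sum_congr rfl (fun i _ => hall i), Finset.sum_const, Finset.card_univ,
        Fintype.card_fin, nsmul_eq_mul] at hsum1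
      have he : (d : ℝ) * ((1 + s) / d) = 1 + s := by field_simp
      rw [he] at hsum1
      linarith [hs]
    rw [key]
    field_simp
    ring
  exact ⟨hQmH, hQmtr, hQmpair, hQmsum, hQpH, hQptr, hQppair, hQpsum, heigm, heigp⟩
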